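/- Let m, n, a ≥ 1 be integers, and let Φ_k denote the k-th cyclotomic polynomial. If gcd(Φ_m(a), Φ_n(a)) > 1, then m/n is an integer power of a prime, i.e., there exist a prime number p and an integer k (possibly negative) such that m/n = p^k. -/

import Mathlib

/-- If `gcd(Φ_m(a), Φ_n(a)) > 1` for integers `m, n, a ≥ 1`, then `m / n` is an
integer power of a prime: `m / n = p ^ k` for some prime `p` and integer `k`. -/
theorem cyclotomic_gcd_gt_one_ratio_prime_pow (m n : ℕ) (a : ℤ)
    (hm : 1 ≤ m) (hn : 1 ≤ n) (ha : 1 ≤ a)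
    (h : 1 < Int.gcd ((Polynomial.cyclotomic m ℤ).eval a)
      ((Polynomial.cyclotomic n ℤ).eval a)) :
    ∃ p : ℕ, p.Prime ∧ ∃ k : ℤ, (m : ℚ) / (n : ℚ) = (p : ℚ) ^ k := by
  set g := Int.gcd ((Polynomial.cyclotomic m ℤ).eval a) ((Polynomial.cyclotomic n ℤ).eval a)
  set q := g.minFac with hq
  have hqp : q.Prime := Nat.minFac_prime (by omega)
  haveI : Fact q.Prime := ⟨hqp⟩
  have hqg : q ∣ g := Nat.minFac_dvd g
  have hdm : (q : ℤ) ∣ (Polynomial.cyclotomic m ℤ).eval a :=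
    dvd_trans (Int.natCast_dvd_natCast.mpr hqg) (Int.gcd_dvd_left _ _)
  have hdn : (q : ℤ) ∣ (Polynomial.cyclotomic n ℤ).eval a :=
    dvd_trans (Int.natCast_dvd_natCast.mpr hqg) (Int.gcd_dvd_right _ _)
  -- roots mod q
  have key : ∀ N : ℕ, (q : ℤ) ∣ (Polynomial.cyclotomic N ℤ).eval a →
      (Polynomial.cyclotomic N (ZMod q)).IsRoot (a : ZMod q) := by
    intro N hd
    have : (Polynomial.cyclotomic N (ZMod q)).eval (a : ZMod q)
        = (((Polynomial.cyclotomic N ℤ).eval a : ℤ) : ZMod q) := by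
      rw [← Polynomial.map_cyclotomic_int N (ZMod q),
        Polynomial.eval_intCast_map (Int.castRingHom (ZMod q))]
      rfl
    rw [Polynomial.IsRoot, this, ZMod.intCast_zmod_eq_zero_iff_dvd]
    exact_mod_cast hd
  have rootm := key m hdm
  have rootn := key n hdn
  have hm0 : m ≠ 0 := by omega
  have hn0 : n ≠ 0 := by omega
  set i := m.factorization q
  set j := n.factorization q
  set m' := m / q ^ i with hm'
  set n' := n / q ^ j with hn'
  have hmeq : q ^ i * m' = m := Nat.ordProj_mul_ordCompl_eq_self m q
  have hneq : q ^ j * n' = n := Nat.ordProj_mul_ordCompl_eq_self n q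
  have hqm' : ¬ q ∣ m' := Nat.not_dvd_ordCompl hqp hm0
  have hqn' : ¬ q ∣ n' := Nat.not_dvd_ordCompl hqp hn0
  haveI : NeZero ((m' : ZMod q)) := ⟨by
    rw [Ne, ZMod.natCast_eq_zero_iff]; exact hqm'⟩
  haveI : NeZero ((n' : ZMod q)) := ⟨by
    rw [Ne, ZMod.natCast_eq_zero_iff]; exact hqn'⟩
  rw [← hmeq] at rootm
  rw [← hneq] at rootn
  have hprim_m := (Polynomial.isRoot_cyclotomic_prime_pow_mul_iff_of_charP).mp rootm
  have hprim_n := (Polynomial.isRoot_cyclotomic_prime_pow_mul_iff_of_charP).mp rootn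
  have heq : m' = n' := by
    rw [hprim_m.eq_orderOf, hprim_n.eq_orderOf]
  refine ⟨q, hqp, (i : ℤ) - j, ?_⟩
  have hq0 : (q : ℚ) ≠ 0 := by exact_mod_cast hqp.pos.ne'
  have hn'0 : n' ≠ 0 := by
    intro h0; rw [h0, mul_zero] at hneq; omega
  rw [zpow_sub₀ hq0, zpow_natCast, zpow_natCast, ← hmeq, ← hneq, heq]
  push_cast
  rw [mul_div_mul_right _ _ (by exact_mod_cast hn'0)]
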